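/- Let $\psi:\mathbb{N}\to\mathbb{R}_{>0}$ satisfy $\lim_{n\to\infty}\psi(n)/n = \infty$ and $\liminf_{n\to\infty}\psi(n)^{1/n} = 1$. Then there exists a non-decreasing function $g:\mathbb{N}\to\mathbb{R}_{>0}$ such that (a) $g(n)\leq\psi(n)$ for all $n$, (b) $\limsup_{n\to\infty} g(n)/\psi(n) = 1$, (c) $\lim_{n\to\infty} g(n)/n = \infty$, and (d) $\lim_{n\to\infty} g(n+1)/g(n) = 1$. -/

import Mathlib

open Filter Finset

/-- If `ψ : ℕ → ℝ_{>0}` satisfies `ψ(n)/n → ∞` and `liminf ψ(n)^{1/n} = 1`,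
then there is a non-decreasing `g : ℕ → ℝ_{>0}` with `g ≤ ψ`, `limsup g/ψ = 1`,
`g(n)/n → ∞`, and `g(n+1)/g(n) → 1`. -/
theorem stmt8 (ψ : ℕ → ℝ) (hψ : ∀ n, 0 < ψ n)
    (hlin : Filter.Tendsto (fun n => ψ n / (n : ℝ)) Filter.atTop Filter.atTop)
    (h : Filter.liminf (fun n => ψ n ^ ((n : ℝ)⁻¹)) Filter.atTop = 1) :
    ∃ g : ℕ → ℝ, (∀ n, 0 < g n) ∧ Monotone g ∧ (∀ n, g n ≤ ψ n) ∧
      Filter.limsup (fun n => g n / ψ n) Filter.atTop = 1 ∧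
      Filter.Tendsto (fun n => g n / (n : ℝ)) Filter.atTop Filter.atTop ∧
      Filter.Tendsto (fun n => g (n + 1) / g n) Filter.atTop (nhds 1) := by
  classical
  have hψ0 : ∀ n, (0:ℝ) ≤ ψ n := fun n => (hψ n).le
  -- linear lower bounds on ψ
  have hlinear : ∀ C : ℝ, ∀ᶠ n : ℕ in atTop, C * n ≤ ψ n := by
    intro C
    filter_upwards [hlin.eventually_ge_atTop (max C 1), eventually_ge_atTop 1] with n h1 h2
    have hn : (0:ℝ) < n := by exact_mod_cast Nat.lt_of_lt_of_le Nat.zero_lt_one h2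
    rw [le_div_iff₀ hn] at h1
    have h3 : C * n ≤ max C 1 * n := mul_le_mul_of_nonneg_right (le_max_left _ _) hn.le
    linarith
  -- argmin over tails
  have hargmin : ∀ n : ℕ, ∃ k, n ≤ k ∧ ∀ j, n ≤ j → ψ k ≤ ψ j := by
    intro n
    obtain ⟨N, hN⟩ := eventually_atTop.1 (hlinear (ψ n + 1))
    set M := max (max n N) 1 with hM
    obtain ⟨k, hk, hkmin⟩ := Finset.exists_min_image (Finset.Icc n M) ψ
      ⟨n, Finset.mem_Icc.2 ⟨le_rfl, le_trans (le_max_left n N) (le_max_left _ 1)⟩⟩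
    refine ⟨k, (Finset.mem_Icc.1 hk).1, ?_⟩
    intro j hj
    by_cases hjM : j ≤ M
    · exact hkmin j (Finset.mem_Icc.2 ⟨hj, hjM⟩)
    · have hjN : N ≤ j :=
        le_trans (le_trans (le_max_right n N) (le_max_left _ 1)) (le_of_not_ge hjM)
      have h1 : (ψ n + 1) * j ≤ ψ j := hN j hjN
      have hj1 : (1:ℝ) ≤ j := by
        exact_mod_cast le_trans (le_max_right (max n N) 1) (le_of_not_ge hjM)
      have h2 : ψ n + 1 ≤ (ψ n + 1) * j := le_mul_of_one_le_right (by linarith [hψ n]) hj1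
      have hkn : ψ k ≤ ψ n := hkmin n
        (Finset.mem_Icc.2 ⟨le_rfl, le_trans (le_max_left n N) (le_max_left _ 1)⟩)
      linarith
  choose mk hmk1 hmk2 using hargmin
  set mf : ℕ → ℝ := fun n => ψ (mk n) with hmf
  have hmpos : ∀ n, 0 < mf n := fun n => hψ _
  have hmψ : ∀ n, mf n ≤ ψ n := fun n => hmk2 n n le_rfl
  have hmmono : Monotone mf := fun a b hab => hmk2 a (mk b) (le_trans hab (hmk1 b))
  have hmgrow : ∀ C : ℝ, ∀ᶠ n : ℕ in atTop, C * n ≤ mf n := by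
    intro C
    obtain ⟨N, hN⟩ := eventually_atTop.1 (hlinear (max C 0))
    filter_upwards [eventually_ge_atTop N] with n hn
    have h1 : max C 0 * (mk n) ≤ ψ (mk n) := hN (mk n) (le_trans hn (hmk1 n))
    have h2 : max C 0 * n ≤ max C 0 * mk n := by
      apply mul_le_mul_of_nonneg_left _ (le_max_right C 0)
      exact_mod_cast hmk1 n
    have h3 : C * n ≤ max C 0 * n :=
      mul_le_mul_of_nonneg_right (le_max_left _ _) (Nat.cast_nonneg n)
    calc C * n ≤ max C 0 * mk n := le_trans h3 h2
      _ ≤ mf n := h1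
  set m0 : ℝ := mf 0 with hm0def
  have hm0 : 0 < m0 := hmpos 0
  -- frequently ψ n ≤ (1+η)^n
  have hfreq : ∀ η : ℝ, 0 < η → ∃ᶠ n : ℕ in atTop, ψ n ≤ (1 + η) ^ n := by
    intro η hη
    have hfr : ∃ᶠ n : ℕ in atTop, ψ n ^ ((n:ℝ)⁻¹) < 1 + η := by
      by_contra hc
      rw [not_frequently] at hc
      have hev : ∀ᶠ n : ℕ in atTop, 1 + η ≤ ψ n ^ ((n:ℝ)⁻¹) := by
        filter_upwards [hc] with n hn
        push_neg at hn
        exact hn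
      have hSdef : Filter.liminf (fun n : ℕ => ψ n ^ ((n:ℝ)⁻¹)) atTop
          = sSup {a : ℝ | ∀ᶠ n : ℕ in atTop, a ≤ ψ n ^ ((n:ℝ)⁻¹)} := rfl
      by_cases hbdd : BddAbove {a : ℝ | ∀ᶠ n : ℕ in atTop, a ≤ ψ n ^ ((n:ℝ)⁻¹)}
      · have h1 : 1 + η ≤ sSup {a : ℝ | ∀ᶠ n : ℕ in atTop, a ≤ ψ n ^ ((n:ℝ)⁻¹)} :=
          le_csSup hbdd hev
        rw [← hSdef, h] at h1
        linarith
      · have h2 := hSdef ▸ h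
        rw [Real.sSup_of_not_bddAbove hbdd] at h2
        norm_num at h2
    rw [frequently_atTop] at hfr ⊢
    intro N
    obtain ⟨n, hn1, hn2⟩ := hfr (max N 1)
    refine ⟨n, le_trans (le_max_left N 1) hn1, ?_⟩
    have hn0 : n ≠ 0 := by
      have := le_trans (le_max_right N 1) hn1; omega
    have key : (ψ n ^ ((n:ℝ)⁻¹)) ^ n = ψ n := Real.rpow_inv_natCast_pow (hψ0 n) hn0
    calc ψ n = (ψ n ^ ((n:ℝ)⁻¹)) ^ n := key.symm
      _ ≤ (1 + η) ^ n := pow_le_pow_left₀ (Real.rpow_nonneg (hψ0 n) _) hn2.le n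
  -- the rate functions
  set Q : ℕ → ℝ := fun k => 1 + 1/((k:ℝ)+1) with hQdef
  set R : ℕ → ℝ := fun k => (Q k) ^ 4 with hRdef
  have hQ1 : ∀ k, 1 < Q k := by
    intro k
    have : 0 < 1/((k:ℝ)+1) := by positivity
    simp only [hQdef]
    linarith
  have hQpos : ∀ k, (0:ℝ) < Q k := fun k => lt_trans one_pos (hQ1 k)
  have hR1 : ∀ k, 1 < R k := fun k => one_lt_pow₀ (hQ1 k) (by norm_num)
  have hRpos : ∀ k, (0:ℝ) < R k := fun k => lt_trans one_pos (hR1 k)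
  have hQanti : ∀ j k : ℕ, j ≤ k → Q k ≤ Q j := by
    intro j k hjk
    simp only [hQdef]
    have h1 : ((j:ℝ)+1) ≤ ((k:ℝ)+1) := by exact_mod_cast Nat.succ_le_succ hjk
    have h2 : (0:ℝ) < (j:ℝ)+1 := by positivity
    have := one_div_le_one_div_of_le h2 h1
    linarith
  have hRanti : ∀ j k : ℕ, j ≤ k → R k ≤ R j := fun j k hjk =>
    pow_le_pow_left₀ (hQpos k).le (hQanti j k hjk) 4
  have hRlim : Tendsto R atTop (nhds 1) := by
    have h0 : Tendsto Q atTop (nhds 1) := by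
      have h1 := tendsto_one_div_add_atTop_nhds_zero_nat (𝕜 := ℝ)
      have h2 := (tendsto_const_nhds (α := ℕ) (x := (1:ℝ)) (f := atTop)).add h1
      simpa [hQdef] using h2
    have := h0.pow 4
    simpa [hRdef] using this
  -- growth lemma
  have hgrow : ∀ c : ℝ, ∀ x : ℝ, 1 < x → ∀ᶠ n : ℕ in atTop, c * n ≤ m0 * x ^ (n/2) := by
    intro c x hx
    have hx0 : (0:ℝ) ≤ x := by linarith
    set s := Real.sqrt x with hs
    have hs2 : s ^ 2 = x := Real.sq_sqrt hx0
    have hs1 : 1 < s := by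
      rw [hs, show (1:ℝ) = Real.sqrt 1 by simp]
      exact Real.sqrt_lt_sqrt (by norm_num) hx
    have hs0 : (0:ℝ) < s := lt_trans one_pos hs1
    have hmain : Tendsto (fun j : ℕ => x ^ j / (2 * (j:ℝ) + 1)) atTop atTop := by
      apply tendsto_atTop_mono' atTop (f₁ := fun j : ℕ => ((s-1)/3) * s ^ j)
      · filter_upwards [eventually_ge_atTop 1] with j hj
        have hj1 : (1:ℝ) ≤ (j:ℝ) := by exact_mod_cast hj
        have hb : 1 + (j:ℝ) * (s - 1) ≤ s ^ j := by
          have := one_add_mul_le_pow (by linarith : (-2:ℝ) ≤ s - 1) j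
          rw [show (1:ℝ) + (s-1) = s by ring] at this
          exact this
        have hsj : (j:ℝ) * (s-1) ≤ s ^ j := by nlinarith
        have hxj : x ^ j = s ^ j * s ^ j := by
          rw [← hs2, ← pow_mul, two_mul, pow_add]
        have hpos : (0:ℝ) < 2 * (j:ℝ) + 1 := by positivity
        rw [le_div_iff₀ hpos, hxj]
        have hsjpos : (0:ℝ) < s ^ j := pow_pos hs0 j
        have key1 : (j:ℝ)*(s-1)*(s^j) ≤ s^j*s^j := by nlinarith [hsj, hsjpos]
        have key2 : (s-1)/3*(2*(j:ℝ)+1) ≤ (s-1)*j := by nlinarith [hj1, hs1]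
        nlinarith [mul_le_mul_of_nonneg_right key2 hsjpos.le, key1]
      · exact Tendsto.const_mul_atTop (by linarith) (tendsto_pow_atTop_atTop_of_one_lt hs1)
    obtain ⟨J, hJ⟩ := eventually_atTop.1 (hmain.eventually_ge_atTop ((max c 0 + 1)/m0))
    filter_upwards [eventually_ge_atTop (2*J)] with n hn
    have hn2 : J ≤ n / 2 := by omega
    have h1 := hJ (n/2) hn2
    rw [div_le_div_iff₀ hm0 (by positivity)] at h1
    have h2 : (n:ℝ) ≤ 2 * ((n/2 : ℕ):ℝ) + 1 := by
      have : n ≤ 2 * (n/2) + 1 := by omega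
      exact_mod_cast this
    have h3 : c * n ≤ (max c 0 + 1) * n := by
      apply mul_le_mul_of_nonneg_right _ (Nat.cast_nonneg n)
      have := le_max_left c 0
      linarith
    have h4 : (max c 0 + 1) * n ≤ (max c 0 + 1) * (2 * ((n/2 : ℕ):ℝ) + 1) := by
      apply mul_le_mul_of_nonneg_left h2
      have := le_max_right c 0
      linarith
    have h5 : (max c 0 + 1) * (2 * ((n/2:ℕ):ℝ) + 1) ≤ m0 * x ^ (n/2) := by linarith [h1]
    calc c * n ≤ (max c 0 + 1) * (2 * ((n/2 : ℕ):ℝ) + 1) := le_trans h3 h4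
      _ ≤ m0 * x ^ (n/2) := h5
  -- existence of the next block endpoint
  have hstep : ∀ (k : ℕ) (prev : ℕ), ∃ nb : ℕ, prev < nb ∧ ψ nb ≤ Q (k+1) ^ nb ∧
      ((k:ℝ)+1) * Q (k+1) ^ nb ≤ R (k+1) ^ (nb - prev) ∧
      ∀ n : ℕ, nb < n → ((k:ℝ)+1) * n ≤ m0 * R (k+2) ^ (n/2) := by
    intro k prev
    have hev1 : ∀ᶠ nb : ℕ in atTop, ((k:ℝ)+1) * Q (k+1) ^ nb ≤ R (k+1) ^ (nb - prev) := by
      have hq3 : 1 < (Q (k+1))^3 := one_lt_pow₀ (hQ1 (k+1)) (by norm_num)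
      have htt := tendsto_pow_atTop_atTop_of_one_lt hq3
      filter_upwards [htt.eventually_ge_atTop (((k:ℝ)+1) * R (k+1) ^ prev),
        eventually_ge_atTop prev] with nb h1 h2
      have hid : R (k+1) ^ nb = Q (k+1) ^ nb * ((Q (k+1))^3) ^ nb := by
        rw [← mul_pow, hRdef]
        ring_nf
      have key : ((k:ℝ)+1) * Q (k+1) ^ nb * R (k+1) ^ prev ≤ R (k+1) ^ nb := by
        rw [hid]
        calc ((k:ℝ)+1) * Q (k+1) ^ nb * R (k+1) ^ prev
            = Q (k+1) ^ nb * (((k:ℝ)+1) * R (k+1) ^ prev) := by ring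
          _ ≤ Q (k+1) ^ nb * ((Q (k+1))^3) ^ nb :=
            mul_le_mul_of_nonneg_left h1 (by positivity)
      rw [pow_sub₀ _ (ne_of_gt (hRpos (k+1))) h2, ← div_eq_mul_inv,
        le_div_iff₀ (pow_pos (hRpos (k+1)) prev)]
      exact key
    have hev2 : ∀ᶠ nb : ℕ in atTop, ∀ n : ℕ, nb < n →
        ((k:ℝ)+1) * n ≤ m0 * R (k+2) ^ (n/2) := by
      obtain ⟨J, hJ⟩ := eventually_atTop.1 (hgrow ((k:ℝ)+1) (R (k+2)) (hR1 _))
      filter_upwards [eventually_ge_atTop J] with nb hnb n hn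
      exact hJ n (le_trans hnb hn.le)
    have hQη : Q (k+1) = 1 + 1/((k:ℝ)+2) := by
      simp only [hQdef]
      push_cast
      ring_nf
    have hfr := hfreq (1/((k:ℝ)+2)) (by positivity)
    rw [← hQη] at hfr
    obtain ⟨nb, hA, hB, hC, hD⟩ :=
      (hfr.and_eventually (hev1.and (hev2.and (eventually_gt_atTop prev)))).exists
    exact ⟨nb, hD, hA, hB, hC⟩
  choose bstep hbs1 hbs2 hbs3 hbs4 using hstep
  obtain ⟨b, hb0, hbrec⟩ : ∃ b : ℕ → ℕ, b 0 = 1 ∧ ∀ k, b (k+1) = bstep k (b k) :=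
    ⟨fun n => Nat.rec 1 (fun k ih => bstep k ih) n, rfl, fun k => rfl⟩
  have hbi : ∀ k, b k < b (k+1) := fun k => hbrec k ▸ hbs1 k (b k)
  have hbψ : ∀ k, ψ (b (k+1)) ≤ Q (k+1) ^ (b (k+1)) := fun k => hbrec k ▸ hbs2 k (b k)
  have hbR : ∀ k : ℕ, ((k:ℝ)+1) * Q (k+1) ^ (b (k+1)) ≤ R (k+1) ^ (b (k+1) - b k) := fun k =>
    hbrec k ▸ hbs3 k (b k)
  have hbG : ∀ k : ℕ, ∀ n : ℕ, b (k+1) < n → ((k:ℝ)+1) * n ≤ m0 * R (k+2) ^ (n/2) := fun k =>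
    hbrec k ▸ hbs4 k (b k)
  have hbmono : StrictMono b := strictMono_nat_of_lt_succ hbi
  have hbk : ∀ k, k + 1 ≤ b k := by
    intro k
    induction k with
    | zero => omega
    | succ k ih => have := hbi k; omega
  -- block index function
  set K : ℕ → ℕ := fun i => ((Finset.range (i+2)).filter (fun k => b k ≤ i)).card with hKdef
  set r : ℕ → ℝ := fun i => R (K i) with hrdef
  have hK1 : ∀ i k, i < b k → K i ≤ k := by
    intro i k hik
    have hsub : ((Finset.range (i+2)).filter (fun j => b j ≤ i)) ⊆ Finset.range k := by
      intro j hj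
      simp only [Finset.mem_filter, Finset.mem_range] at hj ⊢
      by_contra hc
      push_neg at hc
      exact absurd (le_trans (hbmono.monotone hc) hj.2) (not_le.2 hik)
    calc K i ≤ (Finset.range k).card := Finset.card_le_card hsub
      _ = k := Finset.card_range k
  have hK2 : ∀ i k, b k ≤ i → k + 1 ≤ K i := by
    intro i k hk
    have hsub : Finset.range (k+1) ⊆ (Finset.range (i+2)).filter (fun j => b j ≤ i) := by
      intro j hj
      simp only [Finset.mem_range] at hj
      have hj' : j ≤ k := Nat.lt_succ_iff.1 hj
      have hbj : b j ≤ i := le_trans (hbmono.monotone hj') hk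
      have hji : j < i + 2 := by have := hbk j; omega
      simp only [Finset.mem_filter, Finset.mem_range]
      exact ⟨hji, hbj⟩
    calc k + 1 = (Finset.range (k+1)).card := (Finset.card_range _).symm
      _ ≤ K i := Finset.card_le_card hsub
  have hr1 : ∀ i, 1 ≤ r i := fun i => (hR1 _).le
  have hrpos : ∀ i, (0:ℝ) < r i := fun i => hRpos _
  have hrR : ∀ i k, i < b k → R k ≤ r i := fun i k hik => hRanti _ _ (hK1 i k hik)
  have hKtop : Tendsto K atTop atTop := by
    rw [tendsto_atTop]
    intro c
    filter_upwards [eventually_ge_atTop (b c)] with i hi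
    exact le_trans (Nat.le_succ c) (hK2 i c hi)
  have hrlim : Tendsto r atTop (nhds 1) := hRlim.comp hKtop
  -- the function g
  obtain ⟨g, hg0, hgs⟩ : ∃ g : ℕ → ℝ, g 0 = mf 0 ∧
      ∀ n, g (n+1) = min (mf (n+1)) (g n * r n) :=
    ⟨fun n => Nat.rec (mf 0) (fun n ih => min (mf (n+1)) (ih * r n)) n, rfl, fun n => rfl⟩
  have hgm : ∀ n, g n ≤ mf n := by
    intro n
    cases n with
    | zero => rw [hg0]
    | succ n => rw [hgs]; exact min_le_left _ _
  have hgpos : ∀ n, 0 < g n := by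
    intro n
    induction n with
    | zero => rw [hg0]; exact hmpos 0
    | succ n ih => rw [hgs]; exact lt_min (hmpos _) (mul_pos ih (hrpos n))
  have hgmono : Monotone g := by
    apply monotone_nat_of_le_succ
    intro n
    rw [hgs]
    exact le_min (le_trans (hgm n) (hmmono (Nat.le_succ n)))
      (le_mul_of_one_le_right (hgpos n).le (hr1 n))
  have hgψ : ∀ n, g n ≤ ψ n := fun n => (hgm n).trans (hmψ n)
  have hgrat : ∀ n, g (n+1) ≤ g n * r n := fun n => by rw [hgs]; exact min_le_right _ _
  have hprodpos : ∀ a c : ℕ, (0:ℝ) < ∏ i ∈ Finset.Ico a c, r i :=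
    fun a c => Finset.prod_pos (fun i _ => hrpos i)
  have hprod1 : ∀ a c : ℕ, (1:ℝ) ≤ ∏ i ∈ Finset.Ico a c, r i := by
    intro a c
    have := Finset.prod_le_prod (s := Finset.Ico a c) (f := fun _ => (1:ℝ)) (g := r)
      (fun i _ => zero_le_one) (fun i _ => hr1 i)
    simpa using this
  have hunroll : ∀ n, ∃ j, j ≤ n ∧ g n = mf j * ∏ i ∈ Finset.Ico j n, r i := by
    intro n
    induction n with
    | zero => exact ⟨0, le_rfl, by simp [hg0]⟩
    | succ n ih =>
      rcases min_cases (mf (n+1)) (g n * r n) with ⟨he, _⟩ | ⟨he, _⟩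
      · refine ⟨n+1, le_rfl, ?_⟩
        rw [hgs, he]
        simp
      · obtain ⟨j, hj, hje⟩ := ih
        refine ⟨j, le_trans hj (Nat.le_succ n), ?_⟩
        rw [hgs, he, hje, Finset.prod_Ico_succ_top hj]
        ring
  -- (c) : linear growth of g
  have hglin : ∀ C : ℝ, ∀ᶠ n : ℕ in atTop, C * n ≤ g n := by
    intro C
    set C' := max C 1 with hC'
    have hC0 : (0:ℝ) < C' := lt_of_lt_of_le one_pos (le_max_right _ _)
    have hCC : C ≤ C' := le_max_left _ _
    obtain ⟨N₁, hN₁⟩ := eventually_atTop.1 (hmgrow (3*C'))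
    set Kc : ℕ := ⌈C'⌉₊ + 1 with hKc
    filter_upwards [eventually_ge_atTop (2*N₁+3), eventually_ge_atTop (b Kc + 1)]
      with n hn1 hn2
    obtain ⟨j, hjn, hje⟩ := hunroll n
    have hbex : ∃ k, n ≤ b k := ⟨n, by have := hbk n; omega⟩
    set k₀ := Nat.find hbex with hk₀def
    have hk₀ : n ≤ b k₀ := Nat.find_spec hbex
    have hk₀lt : ∀ k, k < k₀ → b k < n := fun k hk =>
      Nat.lt_of_not_le (Nat.find_min hbex hk)
    have hKck : Kc < k₀ := by
      by_contra hc
      push_neg at hc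
      have := hbmono.monotone hc
      omega
    obtain ⟨k', hk'⟩ : ∃ k', k₀ = k' + 2 := ⟨k₀ - 2, by omega⟩
    have hnpos : (0:ℝ) < n := by
      have : 0 < n := by omega
      exact_mod_cast this
    by_cases hcase : n/2 ≤ j
    · -- j large: use linear growth of mf
      have hjN : N₁ ≤ j := by omega
      have h1 : 3*C' * j ≤ mf j := hN₁ j hjN
      have h3j : n ≤ 3*j := by omega
      have h3jr : (n:ℝ) ≤ 3*(j:ℝ) := by exact_mod_cast h3j
      have h2 : C' * n ≤ 3 * C' * j := by
        have := mul_le_mul_of_nonneg_left h3jr hC0.le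
        calc C' * n ≤ C' * (3*(j:ℝ)) := this
          _ = 3 * C' * j := by ring
      have h4 : mf j ≤ g n := by
        rw [hje]
        exact le_mul_of_one_le_right (hmpos j).le (hprod1 j n)
      have h5 : C * n ≤ C' * n := mul_le_mul_of_nonneg_right hCC hnpos.le
      linarith
    · -- j small: use the product over the second half
      push_neg at hcase
      have hsplit : (∏ i ∈ Finset.Ico j (n/2), r i) * (∏ i ∈ Finset.Ico (n/2) n, r i)
          = ∏ i ∈ Finset.Ico j n, r i :=
        Finset.prod_Ico_consecutive r (by omega) (by omega)
      have hlow : m0 * ∏ i ∈ Finset.Ico (n/2) n, r i ≤ g n := by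
        rw [hje, ← hsplit]
        have h1 : m0 ≤ mf j := hmmono (Nat.zero_le j)
        have h2 : (1:ℝ) ≤ ∏ i ∈ Finset.Ico j (n/2), r i := hprod1 _ _
        have h3 : m0 ≤ mf j * ∏ i ∈ Finset.Ico j (n/2), r i :=
          le_trans h1 (le_mul_of_one_le_right (hmpos j).le h2)
        calc m0 * ∏ i ∈ Finset.Ico (n/2) n, r i
            ≤ (mf j * ∏ i ∈ Finset.Ico j (n/2), r i) * ∏ i ∈ Finset.Ico (n/2) n, r i :=
              mul_le_mul_of_nonneg_right h3 (hprodpos (n/2) n).le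
          _ = mf j * ((∏ i ∈ Finset.Ico j (n/2), r i) * ∏ i ∈ Finset.Ico (n/2) n, r i) := by
              ring
      have hpow : R k₀ ^ (n - n/2) ≤ ∏ i ∈ Finset.Ico (n/2) n, r i := by
        have hcard : (Finset.Ico (n/2) n).card = n - n/2 := Nat.card_Ico _ _
        calc R k₀ ^ (n - n/2) = ∏ _i ∈ Finset.Ico (n/2) n, R k₀ := by
              rw [Finset.prod_const, hcard]
          _ ≤ ∏ i ∈ Finset.Ico (n/2) n, r i := by
              apply Finset.prod_le_prod (fun i _ => (hRpos k₀).le)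
              intro i hi
              exact hrR i k₀ (lt_of_lt_of_le (Finset.mem_Ico.1 hi).2 hk₀)
      have hpow2 : R k₀ ^ (n/2) ≤ R k₀ ^ (n - n/2) :=
        pow_le_pow_right₀ (hR1 k₀).le (by omega)
      have hspec : ((k':ℝ)+1) * n ≤ m0 * R k₀ ^ (n/2) := by
        have := hbG k' n ?_
        · rw [hk']; exact_mod_cast this
        · have := hk₀lt (k'+1) (by omega); omega
      have hCk : C' ≤ (k':ℝ)+1 := by
        have h1 : C' ≤ (⌈C'⌉₊ : ℝ) := Nat.le_ceil C'
        have h2 : ⌈C'⌉₊ ≤ k' := by omega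
        have h3 : ((⌈C'⌉₊:ℕ):ℝ) ≤ (k':ℝ) := by exact_mod_cast h2
        linarith
      have hm0R : (0:ℝ) < m0 * R k₀ ^ (n/2) := by positivity
      calc C * n ≤ C' * n := mul_le_mul_of_nonneg_right hCC hnpos.le
        _ ≤ ((k':ℝ)+1) * n := mul_le_mul_of_nonneg_right hCk hnpos.le
        _ ≤ m0 * R k₀ ^ (n/2) := hspec
        _ ≤ m0 * R k₀ ^ (n - n/2) := mul_le_mul_of_nonneg_left hpow2 hm0.le
        _ ≤ m0 * ∏ i ∈ Finset.Ico (n/2) n, r i := mul_le_mul_of_nonneg_left hpow hm0.le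
        _ ≤ g n := hlow
  -- touching mf infinitely often
  have hMtouch : ∀ N : ℕ, ∃ n, N ≤ n ∧ g n = mf n := by
    intro N
    by_contra hc
    push_neg at hc
    have hne : ∀ n, N ≤ n → g n < mf n := fun n hn => lt_of_le_of_ne (hgm n) (hc n hn)
    have hstep' : ∀ n, N ≤ n + 1 → g (n+1) = g n * r n := by
      intro n hn
      rcases min_cases (mf (n+1)) (g n * r n) with ⟨he, _⟩ | ⟨he, _⟩
      · exact absurd (by rw [hgs]; exact he : g (n+1) = mf (n+1)) (hc (n+1) hn)
      · rw [hgs]; exact he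
    have hprod : ∀ n, N ≤ n → g n = g N * ∏ i ∈ Finset.Ico N n, r i := by
      intro n hn
      induction n, hn using Nat.le_induction with
      | base => simp
      | succ n hn ih =>
        rw [hstep' n (by omega), ih, Finset.prod_Ico_succ_top hn]
        ring
    obtain ⟨kk, hkk⟩ := exists_nat_ge (1 / g N)
    set k := max N kk with hkdef
    have hgk : 1 ≤ g N * ((k:ℝ)+1) := by
      have h1 : 1 / g N ≤ (k:ℝ) := le_trans hkk (by exact_mod_cast le_max_right N kk)
      have h2 := hgpos N
      rw [div_le_iff₀ h2] at h1
      nlinarith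
    have hNb : N ≤ b k := le_trans (le_max_left N kk) (le_trans (Nat.le_succ k) (hbk k))
    have hNnB : N ≤ b (k+1) := le_trans hNb (hbi k).le
    have hlt : g (b (k+1)) < mf (b (k+1)) := hne _ hNnB
    have hψb : ψ (b (k+1)) ≤ Q (k+1) ^ (b (k+1)) := hbψ k
    have e1 : g (b (k+1)) = g N * ∏ i ∈ Finset.Ico N (b (k+1)), r i := hprod _ hNnB
    have hsplit : (∏ i ∈ Finset.Ico N (b k), r i) * (∏ i ∈ Finset.Ico (b k) (b (k+1)), r i)
        = ∏ i ∈ Finset.Ico N (b (k+1)), r i :=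
      Finset.prod_Ico_consecutive r hNb (hbi k).le
    have hp2 : R (k+1) ^ (b (k+1) - b k) ≤ ∏ i ∈ Finset.Ico (b k) (b (k+1)), r i := by
      have hcard : (Finset.Ico (b k) (b (k+1))).card = b (k+1) - b k := Nat.card_Ico _ _
      calc R (k+1) ^ (b (k+1) - b k) = ∏ _i ∈ Finset.Ico (b k) (b (k+1)), R (k+1) := by
            rw [Finset.prod_const, hcard]
        _ ≤ ∏ i ∈ Finset.Ico (b k) (b (k+1)), r i := by
            apply Finset.prod_le_prod (fun i _ => (hRpos (k+1)).le)
            intro i hi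
            exact hrR i (k+1) (Finset.mem_Ico.1 hi).2
    have hQpow : (0:ℝ) < Q (k+1) ^ (b (k+1)) := pow_pos (hQpos (k+1)) _
    have low : Q (k+1) ^ (b (k+1)) ≤ g (b (k+1)) := by
      have l1 : g N * (((k:ℝ)+1) * Q (k+1) ^ (b (k+1))) ≤ g N * R (k+1) ^ (b (k+1) - b k) :=
        mul_le_mul_of_nonneg_left (hbR k) (hgpos N).le
      have l2 : g N * R (k+1) ^ (b (k+1) - b k)
          ≤ g N * ∏ i ∈ Finset.Ico (b k) (b (k+1)), r i :=
        mul_le_mul_of_nonneg_left hp2 (hgpos N).le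
      have l3 : g N * ∏ i ∈ Finset.Ico (b k) (b (k+1)), r i
          ≤ g N * ∏ i ∈ Finset.Ico N (b (k+1)), r i := by
        apply mul_le_mul_of_nonneg_left _ (hgpos N).le
        rw [← hsplit]
        exact le_mul_of_one_le_left (hprodpos _ _).le (hprod1 N (b k))
      have l0 : Q (k+1) ^ (b (k+1)) ≤ g N * (((k:ℝ)+1) * Q (k+1) ^ (b (k+1))) := by
        calc Q (k+1) ^ (b (k+1)) = 1 * Q (k+1) ^ (b (k+1)) := (one_mul _).symm
          _ ≤ (g N * ((k:ℝ)+1)) * Q (k+1) ^ (b (k+1)) :=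
            mul_le_mul_of_nonneg_right hgk hQpow.le
          _ = g N * (((k:ℝ)+1) * Q (k+1) ^ (b (k+1))) := by ring
      rw [e1]
      linarith
    have hfinal : mf (b (k+1)) ≤ ψ (b (k+1)) := hmψ _
    linarith
  -- touching ψ infinitely often
  have htouch : ∀ N : ℕ, ∃ n, N ≤ n ∧ g n = ψ n := by
    intro N
    obtain ⟨n, hn, he⟩ := hMtouch N
    refine ⟨mk n, le_trans hn (hmk1 n), ?_⟩
    have h1 : g (mk n) ≤ ψ (mk n) := hgψ _
    have h2 : mf n = ψ (mk n) := rfl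
    have h3 : g n ≤ g (mk n) := hgmono (hmk1 n)
    have h4 : ψ (mk n) ≤ g (mk n) := by rw [← h2, ← he]; exact h3
    linarith
  refine ⟨g, hgpos, hgmono, hgψ, ?_, ?_, ?_⟩
  · -- limsup g/ψ = 1
    have hub : ∀ᶠ n : ℕ in atTop, g n / ψ n ≤ 1 :=
      Eventually.of_forall fun n => div_le_one_of_le₀ (hgψ n) (hψ0 n)
    have hfr : ∃ᶠ n : ℕ in atTop, 1 ≤ g n / ψ n := by
      rw [frequently_atTop]
      intro N
      obtain ⟨n, hn, he⟩ := htouch N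
      exact ⟨n, hn, by rw [he, div_self (ne_of_gt (hψ n))]⟩
    have hbd : IsBoundedUnder (· ≤ ·) atTop (fun n : ℕ => g n / ψ n) :=
      isBoundedUnder_of_eventually_le hub
    have hcb : IsCoboundedUnder (· ≤ ·) atTop (fun n : ℕ => g n / ψ n) :=
      Filter.IsCoboundedUnder.of_frequently_ge hfr
    exact le_antisymm (Filter.limsup_le_of_le hcb hub)
      (Filter.le_limsup_of_frequently_le hfr hbd)
  · -- tendsto g n / n atTop
    rw [tendsto_atTop]
    intro C
    filter_upwards [hglin C, eventually_ge_atTop 1] with n h1 h2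
    have hn : (0:ℝ) < n := by exact_mod_cast Nat.lt_of_lt_of_le Nat.zero_lt_one h2
    rw [le_div_iff₀ hn]
    exact h1
  · -- ratio tends to 1
    apply tendsto_of_tendsto_of_tendsto_of_le_of_le' tendsto_const_nhds hrlim
    · exact Eventually.of_forall fun n => (one_le_div (hgpos n)).2 (hgmono (Nat.le_succ n))
    · refine Eventually.of_forall fun n => ?_
      rw [div_le_iff₀ (hgpos n)]
      calc g (n+1) ≤ g n * r n := hgrat n
        _ = r n * g n := mul_comm _ _
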